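/- Let q be a prime power and ℓ ≥ 1. For every m with 1 ≤ m ≤ ℓ there exists an m-dimensional F_q-subspace U of F_{q^ℓ} such that τ_U = ∏_{u ∈ U \ {0}} u equals 1 or −1 (in particular τ_U ∈ F_q). -/

import Mathlib

open scoped Classical

open Finset Polynomial

/-- Product over a finset of a field closed under inversion, not containing `0` or `-1`, is `1`. -/
lemma aux_inv_closed_prod {F : Type*} [Field F] (S : Finset F)
    (h0 : (0:F) ∉ S) (hneg : (-1:F) ∉ S) (hinv : ∀ a ∈ S, a⁻¹ ∈ S) :
    ∏ x ∈ S, x = 1 := by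
  apply Finset.prod_involution (g := fun a _ => a⁻¹) (f := fun x => x)
  · intro a ha
    exact mul_inv_cancel₀ (fun h => h0 (h ▸ ha))
  · intro a ha h1 hfix
    have ha0 : a ≠ 0 := fun h => h0 (h ▸ ha)
    have hsq : a * a = 1 := by
      have h2 := congrArg (· * a) hfix
      rw [inv_mul_cancel₀ ha0] at h2
      exact h2.symm
    rcases mul_self_eq_one_iff.mp hsq with h | h
    · exact h1 h
    · exact hneg (h ▸ ha)
  · exact fun a ha => inv_inv a
  · exact fun a ha => hinv a ha

/-- The product of all `D`-th roots of unity in a field is `1` or `-1`. -/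
lemma aux_prod_nthRoots {F : Type*} [Field F] (D : ℕ) (hD : 0 < D) :
    (∏ x ∈ nthRootsFinset D (1:F), x) = 1 ∨ (∏ x ∈ nthRootsFinset D (1:F), x) = -1 := by
  have h0 : (0:F) ∉ nthRootsFinset D (1:F) :=
    fun h => (Polynomial.ne_zero_of_mem_nthRootsFinset one_ne_zero h) rfl
  have hinv : ∀ a ∈ nthRootsFinset D (1:F), a⁻¹ ∈ nthRootsFinset D (1:F) := by
    intro a ha
    rw [Polynomial.mem_nthRootsFinset hD] at ha ⊢
    rw [inv_pow, ha, inv_one]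
  by_cases h : (-1 : F) ∈ nthRootsFinset D (1:F)
  · right
    rw [← Finset.insert_erase h, Finset.prod_insert (Finset.notMem_erase _ _)]
    have he : ∏ x ∈ (nthRootsFinset D (1:F)).erase (-1), x = 1 := by
      apply aux_inv_closed_prod
      · exact fun hh => h0 (Finset.mem_of_mem_erase hh)
      · exact Finset.notMem_erase _ _
      · intro a ha
        refine Finset.mem_erase.mpr ⟨?_, hinv a (Finset.mem_of_mem_erase ha)⟩
        intro hh
        apply (Finset.mem_erase.mp ha).1
        rw [← inv_inv a, hh]
        norm_num
    rw [he, mul_one]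
  · left
    exact aux_inv_closed_prod _ h0 h hinv

/-- Orbit decomposition: a finset of nonzero field elements closed under multiplication by
all `D`-th roots of unity has product `±(yᴰ)`. -/
lemma aux_main {F : Type*} [Field F] (D : ℕ) (hD : 0 < D)
    (hcardT : (nthRootsFinset D (1:F)).card = D) :
    ∀ n (S : Finset F), S.card ≤ n → (0:F) ∉ S →
      (∀ c ∈ nthRootsFinset D (1:F), ∀ x ∈ S, c * x ∈ S) →
      ∃ c y : F, (c = 1 ∨ c = -1) ∧ ∏ x ∈ S, x = c * y ^ D := by
  intro n
  induction n with
  | zero =>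
    intro S hcard _ _
    have hS : S = ∅ := Finset.card_eq_zero.mp (Nat.le_zero.mp hcard)
    exact ⟨1, 1, Or.inl rfl, by simp [hS]⟩
  | succ n ih =>
    intro S hcard h0 hcl
    rcases S.eq_empty_or_nonempty with rfl | ⟨u, hu⟩
    · exact ⟨1, 1, Or.inl rfl, by simp⟩
    have hu0 : u ≠ 0 := fun h => h0 (h ▸ hu)
    set T := nthRootsFinset D (1:F) with hT
    set O : Finset F := T.image (fun c => c * u) with hO
    have hOS : O ⊆ S := by
      intro x hx
      rcases Finset.mem_image.mp hx with ⟨c, hc, rfl⟩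
      exact hcl c hc u hu
    have huO : u ∈ O :=
      Finset.mem_image.mpr ⟨1, Polynomial.one_mem_nthRootsFinset hD, one_mul u⟩
    have hprodO : ∏ x ∈ O, x = (∏ c ∈ T, c) * u ^ D := by
      rw [hO, Finset.prod_image (fun a _ b _ h => mul_right_cancel₀ hu0 h),
        Finset.prod_mul_distrib, Finset.prod_const, hcardT]
    have hcard' : (S \ O).card ≤ n := by
      have h1 : 1 ≤ O.card := Finset.card_pos.mpr ⟨u, huO⟩
      have h2 : (S \ O).card = S.card - O.card := Finset.card_sdiff_of_subset hOS
      have h3 : O.card ≤ S.card := Finset.card_le_card hOS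
      omega
    have h0' : (0:F) ∉ S \ O := fun h => h0 (Finset.mem_sdiff.mp h).1
    have hcl' : ∀ c ∈ nthRootsFinset D (1:F), ∀ x ∈ S \ O, c * x ∈ S \ O := by
      intro c hc x hx
      rw [Finset.mem_sdiff] at hx ⊢
      refine ⟨hcl c hc x hx.1, ?_⟩
      intro hmem
      apply hx.2
      rcases Finset.mem_image.mp hmem with ⟨e, he, heq⟩
      have hc0 : c ≠ 0 := Polynomial.ne_zero_of_mem_nthRootsFinset one_ne_zero hc
      have hx_eq : (c⁻¹ * e) * u = x := by
        rw [mul_assoc, heq, ← mul_assoc, inv_mul_cancel₀ hc0, one_mul]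
      have hcD : c ^ D = 1 := (Polynomial.mem_nthRootsFinset hD _).mp hc
      have heD : e ^ D = 1 := (Polynomial.mem_nthRootsFinset hD _).mp he
      have hmem2 : c⁻¹ * e ∈ T := by
        rw [hT, Polynomial.mem_nthRootsFinset hD]
        rw [mul_pow, inv_pow, hcD, heD, inv_one, one_mul]
      rw [hO]
      exact Finset.mem_image.mpr ⟨c⁻¹ * e, hmem2, hx_eq⟩
    obtain ⟨c', y', hc', hy'⟩ := ih (S \ O) hcard' h0' hcl'
    refine ⟨(∏ c ∈ T, c) * c', u * y', ?_, ?_⟩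
    · rcases aux_prod_nthRoots (F := F) D hD with hε | hε <;>
        rcases hc' with rfl | rfl <;> rw [← hT] at hε <;> rw [hε] <;> norm_num
    · rw [← Finset.prod_sdiff hOS, hy', hprodO]
      ring

/-- `gcd (q^a - 1) (q^b - 1)` divides `q^(gcd a b) - 1`. -/
lemma aux_gcd_dvd (q a b : ℕ) (hq : 2 ≤ q) :
    Nat.gcd (q ^ a - 1) (q ^ b - 1) ∣ q ^ Nat.gcd a b - 1 := by
  set g := Nat.gcd (q ^ a - 1) (q ^ b - 1) with hg
  have key : ∀ k : ℕ, g ∣ q ^ k - 1 → (q : ZMod g) ^ k = 1 := by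
    intro k hk
    have h1 : 1 ≤ q ^ k := Nat.one_le_pow _ _ (by omega)
    have h2 : ((q ^ k - 1 : ℕ) : ZMod g) = 0 :=
      (ZMod.natCast_eq_zero_iff _ _).mpr hk
    have h3 : ((q ^ k : ℕ) : ZMod g) - 1 = 0 := by
      rw [← Nat.cast_one (R := ZMod g), ← Nat.cast_sub h1]
      exact h2
    have h4 : ((q ^ k : ℕ) : ZMod g) = 1 := by
      have := sub_eq_zero.mp h3
      simpa using this
    rw [← h4]
    push_cast
    ring
  have ha' : (q : ZMod g) ^ a = 1 := key a (Nat.gcd_dvd_left _ _)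
  have hb' : (q : ZMod g) ^ b = 1 := key b (Nat.gcd_dvd_right _ _)
  have hord : orderOf (q : ZMod g) ∣ Nat.gcd a b :=
    Nat.dvd_gcd (orderOf_dvd_of_pow_eq_one ha') (orderOf_dvd_of_pow_eq_one hb')
  have hgcd : (q : ZMod g) ^ Nat.gcd a b = 1 := orderOf_dvd_iff_pow_eq_one.mp hord
  have h1 : 1 ≤ q ^ Nat.gcd a b := Nat.one_le_pow _ _ (by omega)
  rw [← ZMod.natCast_eq_zero_iff]
  rw [Nat.cast_sub h1]
  push_cast
  rw [hgcd]
  ring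

set_option maxHeartbeats 1600000 in
set_option synthInstance.maxHeartbeats 1000000 in
/-- For every `1 ≤ m ≤ ℓ` there exists an `m`-dimensional `F_q`-subspace `U` of `F_{q^ℓ}`
with `τ_U = ∏_{u ∈ U \ {0}} u` equal to `1` or `−1`. -/
theorem statement7 {K F : Type*} [Field K] [Field F] [Fintype K] [Fintype F] [Algebra K F]
    (q ℓ m : ℕ) (hq : Fintype.card K = q) (hℓ : Module.finrank K F = ℓ)
    (hm1 : 1 ≤ m) (hmℓ : m ≤ ℓ) :
    ∃ U : Submodule K F, Module.finrank K U = m ∧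
      ((∏ u ∈ Finset.univ.filter (fun u : F => u ∈ U ∧ u ≠ 0), u) = 1 ∨
       (∏ u ∈ Finset.univ.filter (fun u : F => u ∈ U ∧ u ≠ 0), u) = -1) := by
  classical
  have hq2 : 2 ≤ q := hq ▸ Fintype.one_lt_card
  set d := Nat.gcd m ℓ with hd
  have hdm : d ∣ m := Nat.gcd_dvd_left m ℓ
  have hdℓ : d ∣ ℓ := Nat.gcd_dvd_right m ℓ
  have hd1 : 0 < d := Nat.gcd_pos_of_pos_left ℓ hm1
  set D := q ^ d - 1 with hD
  have hqd2 : 2 ≤ q ^ d := le_trans hq2 (Nat.le_self_pow (by omega) q)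
  have hD1 : 0 < D := by omega
  have hcardF : Fintype.card F = q ^ ℓ := by
    rw [← hq, ← hℓ]; exact Module.card_eq_pow_finrank
  have hcardFx : Fintype.card Fˣ = q ^ ℓ - 1 := by
    rw [Fintype.card_units, hcardF]
  have hql1 : 1 ≤ q ^ ℓ := Nat.one_le_pow _ _ (by omega)
  have hqℓ2 : 2 ≤ q ^ ℓ := le_trans hq2 (Nat.le_self_pow (by omega) q)
  have hqm1 : 1 ≤ q ^ m := Nat.one_le_pow _ _ (by omega)
  have hDdvdℓ : D ∣ q ^ ℓ - 1 := by
    obtain ⟨k, hk⟩ := hdℓ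
    rw [hk, pow_mul]
    simpa using Nat.sub_dvd_pow_sub_pow (q ^ d) 1 k
  have hDdvdm : D ∣ q ^ m - 1 := by
    obtain ⟨k, hk⟩ := hdm
    rw [hk, pow_mul]
    simpa using Nat.sub_dvd_pow_sub_pow (q ^ d) 1 k
  -- the set of D-th roots of unity has exactly D elements
  obtain ⟨g, hg⟩ := IsCyclic.exists_ofOrder_eq_natCard (α := Fˣ)
  have hgord : orderOf g = q ^ ℓ - 1 := by
    rw [hg, Nat.card_eq_fintype_card, hcardFx]
  have hζord : orderOf (g ^ (orderOf g / D)) = D :=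
    orderOf_pow_orderOf_div (by omega) (hgord ▸ hDdvdℓ)
  have hprim : IsPrimitiveRoot ((g ^ (orderOf g / D) : Fˣ) : F) D := by
    have h1 := IsPrimitiveRoot.orderOf (g ^ (orderOf g / D))
    rw [hζord] at h1
    exact IsPrimitiveRoot.coe_units_iff.mpr h1
  have hcardT : (nthRootsFinset D (1:F)).card = D := hprim.card_nthRootsFinset
  -- characteristic
  obtain ⟨p, pp⟩ := CharP.exists K
  haveI : CharP K p := pp
  obtain ⟨e, hp_prime, hcardK⟩ := FiniteField.card K p
  haveI : Fact p.Prime := ⟨hp_prime⟩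
  haveI : CharP F p := charP_of_injective_algebraMap (algebraMap K F).injective p
  have hqpe : q = p ^ (e : ℕ) := by rw [← hq, hcardK]
  have hqd_pow : q ^ d = p ^ ((e : ℕ) * d) := by rw [hqpe, pow_mul]
  -- the subalgebra E of cardinality q^d
  let E : Subalgebra K F :=
  { carrier := {x : F | x ^ q ^ d = x}
    mul_mem' := fun {a b} ha hb => by
      simp only [Set.mem_setOf_eq] at *
      rw [mul_pow, ha, hb]
    one_mem' := one_pow _
    add_mem' := fun {a b} ha hb => by
      simp only [Set.mem_setOf_eq] at *
      rw [hqd_pow, add_pow_char_pow, ← hqd_pow, ha, hb]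
    zero_mem' := by
      simp only [Set.mem_setOf_eq]
      exact zero_pow (by positivity)
    algebraMap_mem' := fun c => by
      simp only [Set.mem_setOf_eq]
      rw [← map_pow]
      congr 1
      rw [← hq]
      exact FiniteField.pow_card_pow d c }
  have hmemE : ∀ x : F, x ∈ E ↔ x ^ q ^ d = x := fun x => Iff.rfl
  -- cardinality of E
  have hfilterE : (univ.filter (fun x : F => x ∈ E)) = insert (0:F) (nthRootsFinset D (1:F)) := by
    ext x
    simp only [mem_filter, mem_univ, true_and, mem_insert,
      Polynomial.mem_nthRootsFinset hD1, hmemE]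
    constructor
    · intro hx
      rcases eq_or_ne x 0 with rfl | hx0
      · exact Or.inl rfl
      · right
        have hxx : x ^ D * x = 1 * x := by
          rw [← pow_succ, show D + 1 = q ^ d by omega, hx, one_mul]
        exact mul_right_cancel₀ hx0 hxx
    · rintro (rfl | hx1)
      · exact zero_pow (by positivity)
      · rw [show q ^ d = D + 1 by omega, pow_succ, hx1, one_mul]
  have hcardE : Fintype.card E = q ^ d := by
    rw [Fintype.card_subtype, hfilterE,
      Finset.card_insert_of_notMem
        (fun h => (Polynomial.ne_zero_of_mem_nthRootsFinset one_ne_zero h) rfl), hcardT]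
    omega
  -- E is a field
  haveI : Finite E := Subtype.finite
  letI : Field E := (Finite.isField_of_domain E).toField
  haveI : Module.Finite E F := Module.Finite.of_finite
  -- a subspace W over E of E-dimension m / d
  set r := Module.finrank E F with hr
  set k := m / d with hk
  have hkd : k * d = m := Nat.div_mul_cancel hdm
  have hrd : Module.finrank K E * r = ℓ := by
    rw [hr, ← hℓ]
    exact Module.finrank_mul_finrank K E F
  have hrKE : Module.finrank K E = d := by
    have h1 : Fintype.card E = q ^ Module.finrank K E := by
      rw [← hq]; exact Module.card_eq_pow_finrank
    rw [hcardE] at h1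
    exact (Nat.pow_right_injective hq2 h1.symm)
  have hkr : k ≤ r := by
    rw [hrKE] at hrd
    by_contra hlt
    push_neg at hlt
    have : m ≤ ℓ := hmℓ
    nlinarith [hkd, hrd]
  have hkr' : k ≤ Module.finrank E F := by rw [← hr]; exact hkr
  let b := Module.finBasis E F
  let v : Fin k → F := fun i => b (Fin.castLE hkr' i)
  have hli : LinearIndependent E v :=
    b.linearIndependent.comp _ (Fin.castLE_injective hkr')
  set W : Submodule E F := Submodule.span E (Set.range v) with hW
  have hrW : Module.finrank E W = k := by
    rw [hW, finrank_span_eq_card hli, Fintype.card_fin]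
  set U₀ : Submodule K F := W.restrictScalars K with hU₀
  haveI : Module.Finite E W := Module.Finite.of_finite
  have hcardW : Fintype.card W = q ^ m := by
    have h1 : Fintype.card W = Fintype.card E ^ Module.finrank E W :=
      Module.card_eq_pow_finrank
    rw [h1, hrW, hcardE, ← pow_mul, mul_comm d k, hkd]
  have hcardU₀ : Fintype.card U₀ = q ^ m := by
    rw [← hcardW]
    exact Fintype.card_congr (Submodule.restrictScalarsEquiv K E F W).toEquiv
  have hrU₀ : Module.finrank K U₀ = m := by
    have h1 : Fintype.card U₀ = q ^ Module.finrank K U₀ := by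
      rw [← hq]; exact Module.card_eq_pow_finrank
    rw [hcardU₀] at h1
    exact (Nat.pow_right_injective hq2 h1.symm)
  -- the product over nonzero elements of U₀
  set S₀ : Finset F := univ.filter (fun u : F => u ∈ U₀ ∧ u ≠ 0) with hS₀
  have hS₀0 : (0:F) ∉ S₀ := by
    rw [hS₀]
    simp
  have hS₀cl : ∀ c ∈ nthRootsFinset D (1:F), ∀ x ∈ S₀, c * x ∈ S₀ := by
    intro c hc x hx
    rw [hS₀, mem_filter] at hx ⊢
    obtain ⟨-, hxU, hx0⟩ := hx
    have hc0 : c ≠ 0 := Polynomial.ne_zero_of_mem_nthRootsFinset one_ne_zero hc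
    have hcD : c ^ D = 1 := (Polynomial.mem_nthRootsFinset hD1 _).mp hc
    have hcE : c ∈ E := by
      rw [hmemE, show q ^ d = D + 1 by omega, pow_succ, hcD, one_mul]
    refine ⟨mem_univ _, ?_, mul_ne_zero hc0 hx0⟩
    have hxW : x ∈ W := hxU
    have : (⟨c, hcE⟩ : E) • x ∈ W := W.smul_mem _ hxW
    exact (by simpa [Algebra.smul_def] using this : c * x ∈ W)
  obtain ⟨c, y, hcpm, hprod⟩ :=
    aux_main D hD1 hcardT S₀.card S₀ le_rfl hS₀0 hS₀cl
  have hτ0 : (∏ x ∈ S₀, x) ≠ 0 := by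
    rw [hS₀]
    refine Finset.prod_ne_zero_iff.mpr ?_
    intro x hx
    exact (mem_filter.mp hx).2.2
  have hy0 : y ≠ 0 := by
    intro h
    rw [hprod, h, zero_pow (by omega), mul_zero] at hτ0
    exact hτ0 rfl
  -- cardinality of S₀
  have hS₀card : S₀.card = q ^ m - 1 := by
    have h1 : S₀ = (univ.filter (fun u : F => u ∈ U₀)).erase 0 := by
      rw [hS₀]
      ext x
      simp only [mem_filter, mem_univ, true_and, mem_erase]
      tauto
    have h2 : (univ.filter (fun u : F => u ∈ U₀)).card = q ^ m := by
      rw [← hcardU₀]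
      exact (Fintype.card_subtype _).symm
    rw [h1, Finset.card_erase_of_mem (by simp [U₀.zero_mem]), h2]
  -- Bezout coefficients
  obtain ⟨w, hw⟩ := aux_gcd_dvd q m ℓ hq2
  have hbez : ∃ s t : ℤ, (D : ℤ) = (q ^ m - 1 : ℕ) * s + (q ^ ℓ - 1 : ℕ) * t := by
    refine ⟨Nat.gcdA (q ^ m - 1) (q ^ ℓ - 1) * w, Nat.gcdB (q ^ m - 1) (q ^ ℓ - 1) * w, ?_⟩
    have h1 := Nat.gcd_eq_gcd_ab (q ^ m - 1) (q ^ ℓ - 1)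
    have h2 : (D : ℤ) = (Nat.gcd (q ^ m - 1) (q ^ ℓ - 1) : ℤ) * (w : ℤ) := by
      rw [hD]
      exact_mod_cast congrArg (Nat.cast : ℕ → ℤ) hw
    rw [h2, h1]
    ring
  obtain ⟨s, t, hst⟩ := hbez
  -- the scaling unit
  set Y : Fˣ := Units.mk0 y hy0 with hY
  have hYN : Y ^ (q ^ ℓ - 1) = 1 := by
    rw [← hcardFx]
    exact pow_card_eq_one
  set β : Fˣ := Y ^ (-s) with hβ
  have hβM : β ^ (q ^ m - 1) = Y ^ (-(D:ℤ)) := by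
    rw [hβ, ← zpow_natCast (Y ^ (-s)) (q ^ m - 1), ← zpow_mul]
    have harith : -s * ((q ^ m - 1 : ℕ) : ℤ) = -(D:ℤ) + ((q ^ ℓ - 1 : ℕ) : ℤ) * t := by
      rw [hst]; ring
    rw [harith, zpow_add, zpow_mul, zpow_natCast, hYN, one_zpow, mul_one]
  -- the subspace U = β • U₀
  have hβ0 : ((β : Fˣ) : F) ≠ 0 := Units.ne_zero β
  have hinj : Function.Injective (LinearMap.mulLeft K ((β : Fˣ) : F)) := by
    intro a b' hab
    simp only [LinearMap.mulLeft_apply] at hab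
    exact mul_left_cancel₀ hβ0 hab
  refine ⟨U₀.map (LinearMap.mulLeft K ((β : Fˣ) : F)), ?_, ?_⟩
  · rw [← (LinearEquiv.finrank_eq (Submodule.equivMapOfInjective _ hinj U₀)), hrU₀]
  · -- identify the finset of nonzero elements of U with the image of S₀
    have hset : univ.filter
        (fun u : F => u ∈ U₀.map (LinearMap.mulLeft K ((β : Fˣ) : F)) ∧ u ≠ 0)
        = S₀.image (fun x => ((β : Fˣ) : F) * x) := by
      ext x
      simp only [mem_filter, mem_univ, true_and, mem_image, Submodule.mem_map,
        LinearMap.mulLeft_apply]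
      constructor
      · rintro ⟨⟨u, huU₀, rfl⟩, hx0⟩
        have hu0 : u ≠ 0 := by
          intro h
          rw [h, mul_zero] at hx0
          exact hx0 rfl
        exact ⟨u, by rw [hS₀]; simp [huU₀, hu0], rfl⟩
      · rintro ⟨u, huS₀, rfl⟩
        rw [hS₀, mem_filter] at huS₀
        exact ⟨⟨u, huS₀.2.1, rfl⟩, mul_ne_zero hβ0 huS₀.2.2⟩
    rw [hset, Finset.prod_image (fun a _ b' _ h => mul_left_cancel₀ hβ0 h),
      Finset.prod_mul_distrib, Finset.prod_const, hS₀card, hprod]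
    have hyY : y = ((Y : Fˣ) : F) := rfl
    have hβpow : ((β : Fˣ) : F) ^ (q ^ m - 1) = ((Y ^ (-(D:ℤ)) : Fˣ) : F) := by
      rw [← hβM]
      push_cast
      rfl
    have hypow : y ^ D = ((Y ^ (D:ℤ) : Fˣ) : F) := by
      rw [hyY, ← Units.val_pow_eq_pow_val, ← zpow_natCast]
    have hcombine : ((β : Fˣ) : F) ^ (q ^ m - 1) * (c * y ^ D) = c := by
      rw [hβpow, hypow, mul_comm c, ← mul_assoc, ← Units.val_mul, ← zpow_add,
        neg_add_cancel, zpow_zero, Units.val_one, one_mul]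
    rw [hcombine]
    exact hcpm
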